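/- Let p be a prime, G a subgroup of 𝔽_p^*, g, h : G → 𝔽_p^* arbitrary functions, f(x,y) = g(x)(h(x) + y), and m = μ(g·h) where (g·h)(x) = g(x)h(x). Let θ and K be positive reals and let A ⊆ G be a set such that |A·A| ≤ K·|A|^{1+θ}. Then |f(A,A)| ≥ (1/(8K)) · min( |A|^{3−θ} / (p·m²), p·|A|^{−θ} / m ). -/

import Mathlib

open Pointwise

namespace Stmt5Aux
open Finset


variable {p : ℕ} [hp : Fact p.Prime]

/-- number of points of `P` on the line `v = b*u + c`, where `ℓ = (b, c)`. -/
def lcnt (P : Finset (ZMod p × ZMod p)) (ℓ : ZMod p × ZMod p) : ℕ :=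
  (P.filter fun q => q.2 = ℓ.1 * q.1 + ℓ.2).card

lemma card_lines_through (q : ZMod p × ZMod p) :
    ((univ : Finset (ZMod p × ZMod p)).filter fun ℓ => q.2 = ℓ.1 * q.1 + ℓ.2).card = p := by
  haveI : NeZero p := ⟨hp.out.ne_zero⟩
  have h : ((univ : Finset (ZMod p × ZMod p)).filter fun ℓ => q.2 = ℓ.1 * q.1 + ℓ.2)
      = univ.image fun b : ZMod p => (b, q.2 - b * q.1) := by
    ext ℓ
    simp only [mem_filter, mem_univ, true_and, mem_image]
    constructor
    · intro h
      refine ⟨ℓ.1, ?_⟩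
      exact Prod.ext rfl (by rw [h]; ring)
    · rintro ⟨b, -, rfl⟩
      simp only
      ring
  rw [h, Finset.card_image_of_injective _ (fun a b hab => congrArg Prod.fst hab),
    Finset.card_univ, ZMod.card]

lemma sum_lcnt (P : Finset (ZMod p × ZMod p)) :
    ∑ ℓ : ZMod p × ZMod p, lcnt P ℓ = p * P.card := by
  have h1 : ∀ ℓ : ZMod p × ZMod p, lcnt P ℓ
      = ∑ q ∈ P, if q.2 = ℓ.1 * q.1 + ℓ.2 then 1 else 0 := fun ℓ => Finset.card_filter _ _
  rw [Finset.sum_congr rfl fun ℓ _ => h1 ℓ, Finset.sum_comm]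
  have h2 : ∀ q : ZMod p × ZMod p,
      (∑ ℓ : ZMod p × ZMod p, if q.2 = ℓ.1 * q.1 + ℓ.2 then 1 else 0) = p := by
    intro q
    rw [← Finset.card_filter]
    exact card_lines_through q
  rw [Finset.sum_congr rfl fun q _ => h2 q, Finset.sum_const, smul_eq_mul, mul_comm]

lemma card_lines_through_pair {q q' : ZMod p × ZMod p} (h : q ≠ q') :
    ((univ : Finset (ZMod p × ZMod p)).filter
      fun ℓ => q.2 = ℓ.1 * q.1 + ℓ.2 ∧ q'.2 = ℓ.1 * q'.1 + ℓ.2).card ≤ 1 := by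
  apply Finset.card_le_one.mpr
  intro ℓ hℓ ℓ' hℓ'
  simp only [mem_filter, mem_univ, true_and] at hℓ hℓ'
  obtain ⟨h1, h2⟩ := hℓ; obtain ⟨h1', h2'⟩ := hℓ'
  by_cases hx : q.1 = q'.1
  · exact absurd (Prod.ext hx (by rw [h1, h2, hx])) h
  · have hb : ℓ.1 = ℓ'.1 := by
      have e1 : ℓ.1 * (q.1 - q'.1) = q.2 - q'.2 := by rw [h1, h2]; ring
      have e2 : ℓ'.1 * (q.1 - q'.1) = q.2 - q'.2 := by rw [h1', h2']; ring
      exact mul_right_cancel₀ (sub_ne_zero.mpr hx) (e1.trans e2.symm)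
    refine Prod.ext hb ?_
    have := h1.symm.trans h1'
    rw [hb] at this
    exact add_left_cancel this

lemma sum_lcnt_sq (P : Finset (ZMod p × ZMod p)) :
    ∑ ℓ : ZMod p × ZMod p, (lcnt P ℓ) ^ 2 ≤ p * P.card + P.card ^ 2 := by
  have step1 : ∀ ℓ : ZMod p × ZMod p, (lcnt P ℓ) ^ 2
      = ∑ q ∈ P, ∑ q' ∈ P,
          (if q.2 = ℓ.1 * q.1 + ℓ.2 ∧ q'.2 = ℓ.1 * q'.1 + ℓ.2 then 1 else 0) := by
    intro ℓ
    rw [lcnt, Finset.card_filter, sq, Finset.sum_mul_sum]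
    refine Finset.sum_congr rfl fun q _ => Finset.sum_congr rfl fun q' _ => ?_
    by_cases h1 : q.2 = ℓ.1 * q.1 + ℓ.2 <;> by_cases h2 : q'.2 = ℓ.1 * q'.1 + ℓ.2 <;>
      simp [h1, h2]
  calc ∑ ℓ : ZMod p × ZMod p, (lcnt P ℓ) ^ 2
      = ∑ q ∈ P, ∑ q' ∈ P, ∑ ℓ : ZMod p × ZMod p,
          (if q.2 = ℓ.1 * q.1 + ℓ.2 ∧ q'.2 = ℓ.1 * q'.1 + ℓ.2 then 1 else 0) := by
        rw [Finset.sum_congr rfl fun ℓ _ => step1 ℓ, Finset.sum_comm]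
        exact Finset.sum_congr rfl fun q _ => Finset.sum_comm
    _ ≤ ∑ q ∈ P, ∑ q' ∈ P, ((if q = q' then p else 0) + 1) := by
        refine Finset.sum_le_sum fun q _ => Finset.sum_le_sum fun q' _ => ?_
        rw [← Finset.card_filter]
        by_cases hqq : q = q'
        · subst hqq
          have : ((univ : Finset (ZMod p × ZMod p)).filter
              fun ℓ => q.2 = ℓ.1 * q.1 + ℓ.2 ∧ q.2 = ℓ.1 * q.1 + ℓ.2)
              = (univ : Finset (ZMod p × ZMod p)).filter
              fun ℓ => q.2 = ℓ.1 * q.1 + ℓ.2 := by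
            apply Finset.filter_congr
            intro ℓ _
            simp [and_self]
          rw [this, card_lines_through q, if_pos rfl]
          omega
        · simp only [if_neg hqq]
          have := card_lines_through_pair hqq
          omega
    _ = ∑ q ∈ P, ((if q ∈ P then p else 0) + P.card) := by
        refine Finset.sum_congr rfl fun q _ => ?_
        rw [Finset.sum_add_distrib, Finset.sum_ite_eq, Finset.sum_const, smul_eq_mul, mul_one]
    _ ≤ ∑ q ∈ P, (p + P.card) := by
        refine Finset.sum_le_sum fun q hq => ?_
        rw [if_pos hq]
    _ = p * P.card + P.card ^ 2 := by
        rw [Finset.sum_const, smul_eq_mul]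
        ring


lemma incidence_bound (P L : Finset (ZMod p × ZMod p)) :
    ∑ ℓ ∈ L, (lcnt P ℓ : ℝ)
      ≤ P.card * L.card / p + Real.sqrt (p * P.card * L.card) := by
  haveI : NeZero p := ⟨hp.out.ne_zero⟩
  have hp0 : (0 : ℝ) < p := by exact_mod_cast hp.out.pos
  set c0 : ℝ := P.card / p with hc0
  have hcard : ((univ : Finset (ZMod p × ZMod p)).card : ℝ) = (p : ℝ) ^ 2 := by
    rw [Finset.card_univ]
    simp [ZMod.card, sq]
  have e1 : ∑ ℓ : ZMod p × ZMod p, (lcnt P ℓ : ℝ) = p * P.card := by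
    exact_mod_cast congrArg (Nat.cast : ℕ → ℝ) (sum_lcnt P)
  have e2 : ∑ ℓ : ZMod p × ZMod p, ((lcnt P ℓ : ℝ)) ^ 2 ≤ p * P.card + P.card ^ 2 := by
    exact_mod_cast sum_lcnt_sq P
  have hall : ∑ ℓ : ZMod p × ZMod p, ((lcnt P ℓ : ℝ) - c0) ^ 2 ≤ p * P.card := by
    have expand : ∑ ℓ : ZMod p × ZMod p, ((lcnt P ℓ : ℝ) - c0) ^ 2
        = (∑ ℓ : ZMod p × ZMod p, ((lcnt P ℓ : ℝ)) ^ 2)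
          - 2 * c0 * (∑ ℓ : ZMod p × ZMod p, (lcnt P ℓ : ℝ))
          + ((univ : Finset (ZMod p × ZMod p)).card : ℝ) * c0 ^ 2 := by
      rw [Finset.sum_congr rfl (fun ℓ _ => by ring :
        ∀ ℓ ∈ (univ : Finset (ZMod p × ZMod p)), ((lcnt P ℓ : ℝ) - c0) ^ 2
          = (lcnt P ℓ : ℝ) ^ 2 - 2 * c0 * (lcnt P ℓ : ℝ) + c0 ^ 2)]
      rw [Finset.sum_add_distrib, Finset.sum_sub_distrib, ← Finset.mul_sum,
        Finset.sum_const, nsmul_eq_mul]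
    rw [expand, e1, hcard, hc0]
    have : (p : ℝ) ^ 2 * ((P.card : ℝ) / p) ^ 2 = (P.card : ℝ) ^ 2 := by
      field_simp
    rw [this]
    have : 2 * ((P.card : ℝ) / p) * ((p : ℝ) * P.card) = 2 * (P.card : ℝ) ^ 2 := by
      field_simp
    rw [this]
    linarith [e2]
  have hsub : ∑ ℓ ∈ L, ((lcnt P ℓ : ℝ) - c0) ^ 2
      ≤ ∑ ℓ : ZMod p × ZMod p, ((lcnt P ℓ : ℝ) - c0) ^ 2 :=
    Finset.sum_le_sum_of_subset_of_nonneg (Finset.subset_univ L)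
      (fun ℓ _ _ => sq_nonneg _)
  have hCS : (∑ ℓ ∈ L, ((lcnt P ℓ : ℝ) - c0)) ^ 2
      ≤ (L.card : ℝ) * ∑ ℓ ∈ L, ((lcnt P ℓ : ℝ) - c0) ^ 2 := by
    have := Finset.sum_mul_sq_le_sq_mul_sq L (fun _ => (1 : ℝ))
      (fun ℓ => (lcnt P ℓ : ℝ) - c0)
    simpa using this
  have hT : ∑ ℓ ∈ L, ((lcnt P ℓ : ℝ) - c0) ≤ Real.sqrt ((p : ℝ) * P.card * L.card) := by
    have h1 : (∑ ℓ ∈ L, ((lcnt P ℓ : ℝ) - c0)) ^ 2 ≤ (p : ℝ) * P.card * L.card := by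
      calc (∑ ℓ ∈ L, ((lcnt P ℓ : ℝ) - c0)) ^ 2
          ≤ (L.card : ℝ) * ∑ ℓ ∈ L, ((lcnt P ℓ : ℝ) - c0) ^ 2 := hCS
        _ ≤ (L.card : ℝ) * ((p : ℝ) * P.card) := by
            apply mul_le_mul_of_nonneg_left (le_trans hsub hall) (Nat.cast_nonneg _)
        _ = (p : ℝ) * P.card * L.card := by ring
    calc ∑ ℓ ∈ L, ((lcnt P ℓ : ℝ) - c0)
        ≤ |∑ ℓ ∈ L, ((lcnt P ℓ : ℝ) - c0)| := le_abs_self _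
      _ = Real.sqrt ((∑ ℓ ∈ L, ((lcnt P ℓ : ℝ) - c0)) ^ 2) := (Real.sqrt_sq_eq_abs _).symm
      _ ≤ Real.sqrt ((p : ℝ) * P.card * L.card) := Real.sqrt_le_sqrt h1
  have : ∑ ℓ ∈ L, (lcnt P ℓ : ℝ) = (∑ ℓ ∈ L, ((lcnt P ℓ : ℝ) - c0)) + L.card * c0 := by
    rw [Finset.sum_sub_distrib, Finset.sum_const, nsmul_eq_mul]
    ring
  rw [this, hc0]
  have : (L.card : ℝ) * ((P.card : ℝ) / p) = (P.card : ℝ) * L.card / p := by ring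
  rw [this]
  linarith [hT]


end Stmt5Aux

open Stmt5Aux

set_option maxHeartbeats 1000000 in
theorem stmt_5 (p : ℕ) (hp : p.Prime)
    (G : Finset (ZMod p))
    (hG0 : (0 : ZMod p) ∉ G) (hG1 : (1 : ZMod p) ∈ G)
    (hGmul : ∀ x ∈ G, ∀ y ∈ G, x * y ∈ G) (hGinv : ∀ x ∈ G, x⁻¹ ∈ G)
    (g h : ZMod p → ZMod p)
    (hg : ∀ x ∈ G, g x ≠ 0) (hh : ∀ x ∈ G, h x ≠ 0)
    (m : ℕ)
    (hm : m = (G.image fun x => g x * h x).sup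
      fun t => (G.filter fun x => g x * h x = t).card)
    (θ K : ℝ) (hθ : 0 < θ) (hK : 0 < K)
    (A : Finset (ZMod p)) (hA : A ⊆ G)
    (hAA : ((A * A).card : ℝ) ≤ K * (A.card : ℝ) ^ ((1 : ℝ) + θ)) :
    ((Finset.image₂ (fun x y => g x * (h x + y)) A A).card : ℝ) ≥
      (1 / (8 * K)) * min ((A.card : ℝ) ^ ((3 : ℝ) - θ) / ((p : ℝ) * (m : ℝ) ^ 2))
        ((p : ℝ) * (A.card : ℝ) ^ (-θ) / (m : ℝ)) := by
  haveI hpF : Fact p.Prime := ⟨hp⟩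
  haveI : NeZero p := ⟨hp.ne_zero⟩
  -- trivial case : A = ∅
  rcases A.eq_empty_or_nonempty with rfl | hAne
  · have hY : ((p : ℝ) * ((Finset.card (∅ : Finset (ZMod p)) : ℝ)) ^ (-θ) / (m : ℝ)) = 0 := by
      rw [Finset.card_empty]
      rw [Nat.cast_zero, Real.zero_rpow (by linarith : -θ ≠ 0)]
      simp
    rw [hY]
    have hX : (0 : ℝ) ≤ ((Finset.card (∅ : Finset (ZMod p)) : ℝ)) ^ ((3 : ℝ) - θ)
        / ((p : ℝ) * (m : ℝ) ^ 2) := by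
      apply div_nonneg (Real.rpow_nonneg (Nat.cast_nonneg _) _)
      positivity
    have hmin : min (((Finset.card (∅ : Finset (ZMod p)) : ℝ)) ^ ((3 : ℝ) - θ)
        / ((p : ℝ) * (m : ℝ) ^ 2)) 0 = 0 := min_eq_right hX
    rw [hmin, mul_zero]
    positivity
  -- main case
  -- basic positivity
  have hp0 : (0 : ℝ) < p := by exact_mod_cast hp.pos
  have ha0 : (0 : ℝ) < A.card := by exact_mod_cast Finset.card_pos.mpr hAne
  have ha1 : (1 : ℝ) ≤ A.card := by exact_mod_cast Finset.card_pos.mpr hAne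
  have hSne : (A * A).Nonempty := hAne.mul hAne
  have hs0 : (0 : ℝ) < (A * A).card := by exact_mod_cast Finset.card_pos.mpr hSne
  have hm1 : 1 ≤ m := by
    rw [hm]
    refine le_trans ?_ (Finset.le_sup (Finset.mem_image_of_mem _ hG1))
    exact Finset.card_pos.mpr ⟨1, Finset.mem_filter.mpr ⟨hG1, rfl⟩⟩
  have hmr : (1 : ℝ) ≤ m := by exact_mod_cast hm1
  have hm0 : (0 : ℝ) < m := by linarith
  -- the image set
  set F := Finset.image₂ (fun x y => g x * (h x + y)) A A with hFdef
  have hFne : F.Nonempty := Finset.Nonempty.image₂ hAne hAne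
  have hf0 : (0 : ℝ) ≤ F.card := Nat.cast_nonneg _
  -- elements of A are nonzero
  have hAnz : ∀ a ∈ A, (a : ZMod p) ≠ 0 := fun a haA h0 => hG0 (h0 ▸ hA haA)
  -- the lines
  set lmap : ZMod p × ZMod p → ZMod p × ZMod p :=
    fun xa => (g xa.1 * xa.2⁻¹, g xa.1 * h xa.1) with hlmap
  set L : Finset (ZMod p × ZMod p) := (A ×ˢ A).image lmap with hLdef
  have hLne : L.Nonempty := (hAne.product hAne).image _
  have hl0 : (0 : ℝ) < L.card := by exact_mod_cast Finset.card_pos.mpr hLne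
  -- fiber bound : each line has at most m preimages
  have hfiber : ∀ b ∈ L, ((A ×ˢ A).filter fun xa => lmap xa = b).card ≤ m := by
    intro b hb
    obtain ⟨xa0, hxa0, hxa0b⟩ := Finset.mem_image.mp hb
    have hx0A : xa0.1 ∈ A := (Finset.mem_product.mp hxa0).1
    have hb2 : b.2 ∈ G.image (fun x => g x * h x) := by
      refine Finset.mem_image.mpr ⟨xa0.1, hA hx0A, ?_⟩
      rw [← hxa0b]
    calc ((A ×ˢ A).filter fun xa => lmap xa = b).card
        ≤ (G.filter fun x => g x * h x = b.2).card := by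
          apply Finset.card_le_card_of_injOn (fun xa => xa.1)
          · intro xa hxa
            simp only [Finset.coe_filter, Set.mem_setOf_eq] at hxa ⊢
            obtain ⟨hxaA, hxab⟩ := hxa
            refine ⟨hA (Finset.mem_product.mp hxaA).1, ?_⟩
            have := congrArg Prod.snd hxab
            exact this
          · intro xa hxa xa' hxa' hfst
            simp only [Finset.coe_filter, Set.mem_setOf_eq] at hxa hxa'
            obtain ⟨hxaA, hxab⟩ := hxa
            obtain ⟨hxa'A, hxa'b⟩ := hxa'
            have h1 := congrArg Prod.fst hxab
            have h1' := congrArg Prod.fst hxa'b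
            simp only [hlmap] at h1 h1'
            have hgx : g xa.1 ≠ 0 := hg _ (hA (Finset.mem_product.mp hxaA).1)
            simp only at hfst
            have : g xa.1 * xa.2⁻¹ = g xa.1 * xa'.2⁻¹ := by
              rw [h1, hfst]
              exact h1'.symm
            have hinv : xa.2⁻¹ = xa'.2⁻¹ := mul_left_cancel₀ hgx this
            have h2 : xa.2 = xa'.2 := inv_injective hinv
            exact Prod.ext hfst h2
      _ ≤ m := hm ▸ Finset.le_sup (f := fun t => (G.filter fun x => g x * h x = t).card) hb2
  -- many distinct lines : |A|^2 ≤ |L| * m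
  have hA2 : (A ×ˢ A).card ≤ L.card * m := by
    rw [Finset.card_eq_sum_card_fiberwise (fun xa hxa => Finset.mem_image_of_mem lmap hxa)]
    calc ∑ b ∈ L, ((A ×ˢ A).filter fun xa => lmap xa = b).card
        ≤ ∑ _b ∈ L, m := Finset.sum_le_sum hfiber
      _ = L.card * m := by rw [Finset.sum_const, smul_eq_mul]
  have hA2r : (A.card : ℝ) ^ 2 ≤ (L.card : ℝ) * m := by
    have : A.card ^ 2 ≤ L.card * m := by
      rw [sq, ← Finset.card_product]
      exact hA2
    exact_mod_cast this
  -- the point set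
  set P : Finset (ZMod p × ZMod p) := (A * A) ×ˢ F with hPdef
  have hPcard : (P.card : ℝ) = ((A * A).card : ℝ) * F.card := by
    rw [hPdef, Finset.card_product]
    push_cast
    ring
  -- each line of L contains at least |A| points of P
  have hline : ∀ ℓ ∈ L, A.card ≤ lcnt P ℓ := by
    intro ℓ hℓ
    obtain ⟨xa, hxa, rfl⟩ := Finset.mem_image.mp hℓ
    obtain ⟨hxA, haA⟩ := Finset.mem_product.mp hxa
    have ha0' : xa.2 ≠ 0 := hAnz _ haA
    apply Finset.card_le_card_of_injOn (fun y => (xa.2 * y, g xa.1 * (h xa.1 + y)))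
    · intro y hy
      simp only [lcnt, Finset.coe_filter, Set.mem_setOf_eq]
      refine ⟨Finset.mem_product.mpr ⟨Finset.mul_mem_mul haA hy, ?_⟩, ?_⟩
      · exact Finset.mem_image₂_of_mem hxA hy
      · show g xa.1 * (h xa.1 + y) = g xa.1 * xa.2⁻¹ * (xa.2 * y) + g xa.1 * h xa.1
        rw [show g xa.1 * xa.2⁻¹ * (xa.2 * y) = g xa.1 * ((xa.2⁻¹ * xa.2) * y) by ring,
          inv_mul_cancel₀ ha0']
        ring
    · intro y _ y' _ hyy
      have := congrArg Prod.fst hyy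
      simp only at this
      exact mul_left_cancel₀ ha0' this
  -- incidence count, lower and upper bound
  have hI1 : (L.card : ℝ) * A.card ≤ ∑ ℓ ∈ L, (lcnt P ℓ : ℝ) := by
    have := Finset.card_nsmul_le_sum L (fun ℓ => lcnt P ℓ) A.card hline
    rw [smul_eq_mul] at this
    exact_mod_cast this
  have hI2 := incidence_bound P L
  rw [hPcard] at hI2
  -- notation for the real quantities
  set a : ℝ := (A.card : ℝ) with hadef
  set s : ℝ := ((A * A).card : ℝ) with hsdef
  set fc : ℝ := (F.card : ℝ) with hfdef
  set l : ℝ := (L.card : ℝ) with hldef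
  have hIneq : l * a ≤ s * fc * l / p + Real.sqrt (p * (s * fc) * l) :=
    le_trans hI1 hI2
  have hfc1 : (1 : ℝ) ≤ fc := by
    rw [hfdef]
    exact_mod_cast Finset.card_pos.mpr hFne
  -- key inequality
  have key : min ((a : ℝ) ^ ((3 : ℝ) - θ) / ((p : ℝ) * (m : ℝ) ^ 2))
      ((p : ℝ) * a ^ (-θ) / (m : ℝ)) * a ^ ((1 : ℝ) + θ) ≤ 8 * fc * s := by
    have harp : (0 : ℝ) < a ^ ((1 : ℝ) + θ) := Real.rpow_pos_of_pos ha0 _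
    by_cases hcase : l * a / 2 ≤ s * fc * l / p
    · -- main term dominates : p * a ≤ 2 * s * fc
      have h1 : p * (l * a / 2) ≤ s * fc * l := by
        rw [div_le_div_iff₀ (by norm_num) hp0] at hcase
        linarith
      have h2 : p * a ≤ 2 * (s * fc) := by
        nlinarith [hl0]
      refine le_trans (mul_le_mul_of_nonneg_right (min_le_right _ _) harp.le) ?_
      have hmul : a ^ (-θ) * a ^ ((1 : ℝ) + θ) = a := by
        rw [← Real.rpow_add ha0]
        norm_num
      have e : (p : ℝ) * a ^ (-θ) / (m : ℝ) * a ^ ((1 : ℝ) + θ) = (p : ℝ) * a / m := by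
        rw [div_mul_eq_mul_div, mul_assoc, hmul]
      rw [e]
      have hle : (p : ℝ) * a / m ≤ (p : ℝ) * a := div_le_self (by positivity) hmr
      have h8 : 2 * (s * fc) ≤ 8 * fc * s := by nlinarith [mul_nonneg hs0.le hf0]
      linarith
    · -- sqrt term dominates
      rw [not_le] at hcase
      have hsq : l * a / 2 ≤ Real.sqrt (p * (s * fc) * l) := by linarith
      have hsq2 : (l * a / 2) ^ 2 ≤ p * (s * fc) * l := by
        have hnn : (0 : ℝ) ≤ p * (s * fc) * l := by positivity
        have h0 : (0 : ℝ) ≤ l * a / 2 := by positivity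
        have hpow := pow_le_pow_left₀ h0 hsq 2
        rwa [Real.sq_sqrt hnn] at hpow
      have h3 : l * a ^ 2 ≤ 4 * (p * (s * fc)) := by
        nlinarith [hl0]
      have h4 : a ^ 4 ≤ 4 * (p * (s * fc)) * m := by
        nlinarith [mul_le_mul_of_nonneg_right hA2r (sq_nonneg a),
          mul_le_mul_of_nonneg_right h3 hm0.le, sq_nonneg a]
      refine le_trans (mul_le_mul_of_nonneg_right (min_le_left _ _) harp.le) ?_
      have hmul4 : a ^ ((3 : ℝ) - θ) * a ^ ((1 : ℝ) + θ) = a ^ (4 : ℕ) := by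
        rw [← Real.rpow_add ha0, ← Real.rpow_natCast a 4]
        norm_num
      have e : a ^ ((3 : ℝ) - θ) / ((p : ℝ) * (m : ℝ) ^ 2) * a ^ ((1 : ℝ) + θ)
          = a ^ (4 : ℕ) / ((p : ℝ) * (m : ℝ) ^ 2) := by
        rw [div_mul_eq_mul_div, hmul4]
      rw [e, div_le_iff₀ (by positivity)]
      have hmm : 4 * ((p : ℝ) * (s * fc)) * m * 1 ≤ 4 * ((p : ℝ) * (s * fc)) * m * m :=
        mul_le_mul_of_nonneg_left hmr (by positivity)
      nlinarith [hmm, h4]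
  -- finish : divide by a^(1+θ) and then by 8K
  have harp : (0 : ℝ) < a ^ ((1 : ℝ) + θ) := Real.rpow_pos_of_pos ha0 _
  have hKa : 8 * fc * s ≤ 8 * fc * (K * a ^ ((1 : ℝ) + θ)) := by
    apply mul_le_mul_of_nonneg_left hAA
    positivity
  have hmin8K : min ((a : ℝ) ^ ((3 : ℝ) - θ) / ((p : ℝ) * (m : ℝ) ^ 2))
      ((p : ℝ) * a ^ (-θ) / (m : ℝ)) ≤ 8 * K * fc := by
    have hd := le_trans key hKa
    rw [show 8 * fc * (K * a ^ ((1 : ℝ) + θ)) = (8 * K * fc) * a ^ ((1 : ℝ) + θ) by ring] at hd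
    exact le_of_mul_le_mul_right hd harp
  rw [ge_iff_le]
  have hstep := mul_le_mul_of_nonneg_left hmin8K
    (by positivity : (0 : ℝ) ≤ 1 / (8 * K))
  have heq : (1 / (8 * K)) * (8 * K * fc) = fc := by field_simp
  rw [heq] at hstep
  exact hstep
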